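/- Let T be a regular and proper idempotent complete k-linear triangulated category, and let T be a full triangulated subcategory of a proper k-linear triangulated category T'. Then T is admissible in T', that is, the inclusion functor T ↪ T' admits both a right adjoint and a left adjoint. -/

import Mathlib

/-!
Statement 3: Let `T` be a regular and proper idempotent complete `k`-linear
triangulated category, realized as a (strictly) full triangulated subcategory of a
proper `k`-linear triangulated category `T'`.  Then `T` is admissible in `T'`: the
inclusion functor admits both a right and a left adjoint.

The subcategory `T` is modeled by a class of objects `P` of `T'` which is closed
under isomorphisms, shifts and extensions; regularity of `T` means the existence
of a strong generator (`genIdx G n = P` for some `G ∈ P`, `n`).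
-/

open CategoryTheory Limits Pretriangulated DirectSum
open ZeroObject
set_option linter.unusedSectionVars false
set_option linter.unusedVariables false
set_option maxHeartbeats 1000000

universe v u w

section

variable {C : Type u} [Category.{v} C] [HasZeroObject C] [Preadditive C]
  [HasShift C ℤ] [∀ n : ℤ, (shiftFunctor C n).Additive] [Pretriangulated C]
  [HasBinaryBiproducts C]

/-- The envelope `⟨I⟩`: closure under shifts, finite direct sums and direct summands. -/
inductive envelope (I : Set C) : C → Prop
  | of {X : C} : X ∈ I → envelope I X
  | shift {X : C} (n : ℤ) : envelope I X → envelope I (X⟦n⟧)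
  | sum {X Y : C} : envelope I X → envelope I Y → envelope I (X ⊞ Y)
  | summand {X Z : C} (s : X ⟶ Z) (r : Z ⟶ X) :
      s ≫ r = 𝟙 X → envelope I Z → envelope I X

/-- `I₁ * I₂`: objects fitting into a distinguished triangle with outer terms in `I₁`, `I₂`. -/
def starProd (I₁ I₂ : Set C) : Set C :=
  {Y | ∃ (Y₁ Y₂ : C) (_ : Y₁ ∈ I₁) (_ : Y₂ ∈ I₂) (f : Y₁ ⟶ Y) (g : Y ⟶ Y₂)
    (h : Y₂ ⟶ Y₁⟦(1 : ℤ)⟧), Triangle.mk f g h ∈ distTriang C}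

/-- `I₁ ◇ I₂ = ⟨I₁ * I₂⟩`. -/
def diamond (I₁ I₂ : Set C) : Set C := {X | envelope (starProd I₁ I₂) X}

/-- `genIdx X d = ⟨X⟩_{d+1}`. -/
def genIdx (X : C) : ℕ → Set C
  | 0 => {Y | envelope {X} Y}
  | d + 1 => diamond (genIdx X d) {Y | envelope {X} Y}

end

section Aux

variable {C : Type u} [Category.{v} C] [HasZeroObject C] [Preadditive C]
  [HasShift C ℤ] [∀ n : ℤ, (shiftFunctor C n).Additive] [Pretriangulated C]
  [HasBinaryBiproducts C]

/-- Induction principle for the envelope, for an isomorphism-stable predicate. -/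
lemma envelope_ind_shift {S : Set C} {Q : C → Prop}
    (hQiso : ∀ {X Y : C}, (X ≅ Y) → Q X → Q Y)
    (hQsum : ∀ {X Y : C}, Q X → Q Y → Q (X ⊞ Y))
    (hQsummand : ∀ {X Z : C} (s : X ⟶ Z) (r : Z ⟶ X), s ≫ r = 𝟙 X → Q Z → Q X)
    (hbase : ∀ X ∈ S, ∀ n : ℤ, Q (X⟦n⟧))
    {X : C} (hX : envelope S X) : Q X := by
  have main : ∀ {X : C}, envelope S X → ∀ n : ℤ, Q (X⟦n⟧) := by
    intro X hX
    induction hX with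
    | of h => exact hbase _ h
    | shift m _ ih =>
        intro n
        exact hQiso ((shiftFunctorAdd C m n).app _) (ih (m + n))
    | sum hA hB ih1 ih2 =>
        rename_i A B
        intro n
        haveI : PreservesBinaryBiproducts (shiftFunctor C n) :=
          preservesBinaryBiproducts_of_preservesBiproducts _
        exact hQiso ((shiftFunctor C n).mapBiprod A B).symm (hQsum (ih1 n) (ih2 n))
    | summand s r hsr _ ih =>
        intro n
        exact hQsummand ((shiftFunctor C n).map s) ((shiftFunctor C n).map r)
          (by rw [← (shiftFunctor C n).map_comp, hsr, (shiftFunctor C n).map_id]) (ih n)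
  exact hQiso ((shiftFunctorZero C ℤ).app X) (main hX 0)

lemma zero_mem_envelope (G : C) : envelope {G} (0 : C) :=
  envelope.summand (0 : (0 : C) ⟶ G) 0 (by simp [Limits.id_zero]) (envelope.of rfl)

lemma genIdx_shift {G : C} {d : ℕ} {X : C} (h : X ∈ genIdx G d) (n : ℤ) :
    (X⟦n⟧ : C) ∈ genIdx G d := by
  cases d with
  | zero => exact envelope.shift n h
  | succ d => exact envelope.shift n h

lemma genIdx_mono_succ {G : C} {d : ℕ} {X : C} (h : X ∈ genIdx G d) :
    X ∈ genIdx G (d + 1) :=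
  envelope.of ⟨X, 0, h, zero_mem_envelope G, 𝟙 X, 0, 0, contractible_distinguished X⟩

lemma genIdx_mono {G : C} {d e : ℕ} (hde : d ≤ e) : genIdx G d ⊆ genIdx G e := by
  induction hde with
  | refl => exact fun _ h => h
  | step _ ih => exact fun X h => genIdx_mono_succ (ih h)

lemma envelope_le_genIdx {G : C} (d : ℕ) {X : C} (h : envelope {G} X) :
    X ∈ genIdx G d :=
  genIdx_mono (Nat.zero_le d) h

lemma starProd_shift {S₁ S₂ : Set C}
    (h₁ : ∀ A ∈ S₁, ∀ n : ℤ, (A⟦n⟧ : C) ∈ S₁) (h₂ : ∀ A ∈ S₂, ∀ n : ℤ, (A⟦n⟧ : C) ∈ S₂)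
    {X : C} (hX : X ∈ starProd S₁ S₂) (n : ℤ) : (X⟦n⟧ : C) ∈ starProd S₁ S₂ := by
  obtain ⟨Y₁, Y₂, m₁, m₂, f, g, h, hT⟩ := hX
  have := Triangle.shift_distinguished (Triangle.mk f g h) hT n
  exact ⟨Y₁⟦n⟧, Y₂⟦n⟧, h₁ _ m₁ n, h₂ _ m₂ n, _, _, _, this⟩

section Subcat

variable {P : Set C}

lemma biprod_mem
    (hext : ∀ (T : Triangle C), T ∈ (distTriang C) → T.obj₁ ∈ P → T.obj₃ ∈ P → T.obj₂ ∈ P)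
    {X Y : C} (hX : X ∈ P) (hY : Y ∈ P) : (X ⊞ Y) ∈ P :=
  hext _ (binaryBiproductTriangle_distinguished X Y) hX hY

lemma envelope_mem {G : C} (hG : G ∈ P)
    (hshift : ∀ (X : C) (n : ℤ), X ∈ P → (X⟦n⟧ : C) ∈ P)
    (hext : ∀ (T : Triangle C), T ∈ (distTriang C) → T.obj₁ ∈ P → T.obj₃ ∈ P → T.obj₂ ∈ P)
    (hsummand : ∀ {X Z : C} (s : X ⟶ Z) (r : Z ⟶ X), s ≫ r = 𝟙 X → Z ∈ P → X ∈ P)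
    {X : C} (hX : envelope {G} X) : X ∈ P := by
  induction hX with
  | of h => exact Set.mem_singleton_iff.mp h ▸ hG
  | shift n _ ih => exact hshift _ n ih
  | sum _ _ ih₁ ih₂ => exact biprod_mem hext ih₁ ih₂
  | summand s r hsr _ ih => exact hsummand s r hsr ih

end Subcat

end Aux

section LinAux

variable (k : Type w) [Field k]

lemma fd_component {M : ℤ → Type v} [∀ j, AddCommGroup (M j)] [∀ j, Module k (M j)]
    (h : FiniteDimensional k (⨁ j : ℤ, M j)) (j : ℤ) : FiniteDimensional k (M j) := by
  haveI := h
  exact Module.Finite.of_surjective (DirectSum.component k ℤ M j)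
    (fun x => ⟨DirectSum.lof k ℤ M j x, DirectSum.component.lof_self k j x⟩)

lemma finsupport {M : ℤ → Type v} [∀ j, AddCommGroup (M j)] [∀ j, Module k (M j)]
    (h : FiniteDimensional k (⨁ j : ℤ, M j)) : {j : ℤ | ∃ x : M j, x ≠ 0}.Finite := by
  classical
  obtain ⟨S, hS⟩ := Module.finite_def.mp h
  refine Set.Finite.subset (S.sup (fun v => DFinsupp.support v)).finite_toSet ?_
  rintro j ⟨x, hx⟩
  by_contra hj
  apply hx
  have hmem : ∀ v ∈ Submodule.span k (S : Set (⨁ j : ℤ, M j)),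
      DirectSum.component k ℤ M j v = 0 := by
    intro v hv
    refine Submodule.span_induction (fun y hy => ?_) (map_zero _)
      (fun a b _ _ ha hb => by rw [map_add, ha, hb, add_zero])
      (fun c y _ hy => by rw [map_smul, hy, smul_zero]) hv
    have hjy : j ∉ DFinsupp.support y := by
      intro hmem
      exact hj (Finset.mem_coe.mpr (Finset.mem_sup.mpr ⟨y, hy, hmem⟩))
    rw [← DirectSum.apply_eq_component]; exact DFinsupp.notMem_support_iff.mp hjy
  have := hmem (DirectSum.lof k ℤ M j x) (by rw [hS]; trivial)
  rwa [DirectSum.component.lof_self] at this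

end LinAux

section SpanAux

variable {C : Type u} [Category.{v} C] [HasZeroObject C] [Preadditive C]
  [HasShift C ℤ] [∀ n : ℤ, (shiftFunctor C n).Additive] [Pretriangulated C]
  [HasBinaryBiproducts C]
variable (k : Type w) [Field k] [Linear k C]

/-- From a list of maps `G⟦m⟧ ⟶ Z` produce one object of the envelope of `G` with a map
to `Z` through which everything in the span factors. -/
lemma span_factor (G Z : C) (L : List (Σ m : ℤ, ((G⟦m⟧ : C) ⟶ Z))) :
    ∃ (Y : C), envelope {G} Y ∧ ∃ α : Y ⟶ Z,
      (∀ (W : C) (ψ : Z ⟶ W), (∀ e ∈ L, e.2 ≫ ψ = 0) → α ≫ ψ = 0) ∧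
      (∀ (m : ℤ) (f : (G⟦m⟧ : C) ⟶ Z),
        f ∈ Submodule.span k {g : (G⟦m⟧ : C) ⟶ Z |
          (⟨m, g⟩ : Σ m : ℤ, ((G⟦m⟧ : C) ⟶ Z)) ∈ L} →
        ∃ β : (G⟦m⟧ : C) ⟶ Y, β ≫ α = f) := by
  induction L with
  | nil =>
      refine ⟨G, envelope.of rfl, 0, fun W ψ _ => zero_comp, fun m f hf => ⟨0, ?_⟩⟩
      have : f = 0 := by
        simpa using hf
      rw [this, zero_comp]
  | cons e L ih =>
      obtain ⟨Y', hY', α', hz', hf'⟩ := ih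
      refine ⟨(G⟦e.1⟧ : C) ⊞ Y',
        envelope.sum (envelope.shift e.1 (envelope.of rfl)) hY',
        biprod.desc e.2 α', ?_, ?_⟩
      · intro W ψ hψ
        apply biprod.hom_ext'
        · rw [biprod.inl_desc_assoc, comp_zero]
          exact hψ e (List.mem_cons_self)
        · rw [biprod.inr_desc_assoc, comp_zero]
          exact hz' W ψ (fun e' he' => hψ e' (List.mem_cons_of_mem e he'))
      · intro m f hf
        refine Submodule.span_induction (p := fun f _ =>
            ∃ β : (G⟦m⟧ : C) ⟶ (G⟦e.1⟧ : C) ⊞ Y', β ≫ biprod.desc e.2 α' = f)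
          ?_ ⟨0, zero_comp⟩
          (fun a b _ _ ⟨βa, ha⟩ ⟨βb, hb⟩ => ⟨βa + βb, by rw [Preadditive.add_comp, ha, hb]⟩)
          (fun c y _ ⟨β, hβ⟩ => ⟨c • β, by rw [Linear.smul_comp, hβ]⟩) hf
        intro g hg
        rcases List.mem_cons.mp hg with hg | hg
        · obtain ⟨m', g'⟩ := e
          obtain ⟨rfl, hg2⟩ := Sigma.mk.inj_iff.mp hg
          refine ⟨biprod.inl, ?_⟩
          rw [biprod.inl_desc]
          exact (eq_of_heq hg2).symm
        · obtain ⟨β', hβ'⟩ := hf' m g (Submodule.subset_span hg)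
          exact ⟨β' ≫ biprod.inr, by rw [Category.assoc, biprod.inr_desc, hβ']⟩

/-- Choose a list spanning a finitely supported family of finite-dimensional
submodules of the `Hom(G⟦m⟧, Z)`. -/
lemma exists_list_span (G Z : C) (V : ∀ m : ℤ, Submodule k ((G⟦m⟧ : C) ⟶ Z))
    (hfin : ∀ m : ℤ, FiniteDimensional k ((G⟦m⟧ : C) ⟶ Z))
    (hsupp : {m : ℤ | V m ≠ ⊥}.Finite) :
    ∃ L : List (Σ m : ℤ, ((G⟦m⟧ : C) ⟶ Z)),
      (∀ e ∈ L, e.2 ∈ V e.1) ∧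
      (∀ m, V m ≤ Submodule.span k
        {g : (G⟦m⟧ : C) ⟶ Z | (⟨m, g⟩ : Σ m : ℤ, ((G⟦m⟧ : C) ⟶ Z)) ∈ L}) := by
  classical
  have hfg : ∀ m, ∃ t : Finset ((G⟦m⟧ : C) ⟶ Z),
      Submodule.span k (t : Set ((G⟦m⟧ : C) ⟶ Z)) = V m := by
    intro m
    haveI := hfin m
    haveI : IsNoetherian k ((G⟦m⟧ : C) ⟶ Z) := IsNoetherian.iff_fg.mpr inferInstance
    exact IsNoetherian.noetherian (V m)
  choose t ht using hfg
  refine ⟨(hsupp.toFinset.sigma t).toList, ?_, ?_⟩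
  · rintro ⟨m, g⟩ he
    rw [Finset.mem_toList, Finset.mem_sigma] at he
    rw [← ht m]
    exact Submodule.subset_span he.2
  · intro m
    by_cases hm : m ∈ hsupp.toFinset
    · rw [← ht m]
      apply Submodule.span_mono
      intro g hg
      simp only [Set.mem_setOf_eq, Finset.mem_toList, Finset.mem_sigma]
      exact ⟨hm, hg⟩
    · rw [Set.Finite.mem_toFinset, Set.mem_setOf_eq, not_not] at hm
      rw [hm]
      exact bot_le

end SpanAux

section Main

variable {C : Type u} [Category.{v} C] [HasZeroObject C] [Preadditive C]
  [HasShift C ℤ] [∀ n : ℤ, (shiftFunctor C n).Additive] [Pretriangulated C]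
  [HasBinaryBiproducts C]

/-- Surjectivity of `Hom(A, X) → Hom(A, X')` for all `A ∈ S`. -/
def REpi (S : Set C) {X X' : C} (ψ : X ⟶ X') : Prop :=
  ∀ ⦃A : C⦄, A ∈ S → ∀ g : A ⟶ X', ∃ f : A ⟶ X, f ≫ ψ = g

/-- `u` kills the kernel of `(· ≫ ψ)` on objects of `S`. -/
def RKills (S : Set C) {X X' X₂ : C} (ψ : X ⟶ X') (u : X ⟶ X₂) : Prop :=
  ∀ ⦃A : C⦄, A ∈ S → ∀ f : A ⟶ X, f ≫ ψ = 0 → f ≫ u = 0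

/-- Surjectivity of `Hom(X, A) → Hom(X', A)` for all `A ∈ S`. -/
def LEpi (S : Set C) {X' X : C} (ψ : X' ⟶ X) : Prop :=
  ∀ ⦃A : C⦄, A ∈ S → ∀ g : X' ⟶ A, ∃ f : X ⟶ A, ψ ≫ f = g

/-- `u` kills the kernel of `(ψ ≫ ·)` on objects of `S`. -/
def LKills (S : Set C) {X' X X₂ : C} (ψ : X' ⟶ X) (u : X₂ ⟶ X) : Prop :=
  ∀ ⦃A : C⦄, A ∈ S → ∀ f : X ⟶ A, ψ ≫ f = 0 → u ≫ f = 0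

lemma REpi.mono {S S' : Set C} {X X' : C} {ψ : X ⟶ X'} (h : REpi S' ψ) (hS : S ⊆ S') :
    REpi S ψ := fun _ hA => h (hS hA)

lemma RKills.mono {S S' : Set C} {X X' X₂ : C} {ψ : X ⟶ X'} {u : X ⟶ X₂}
    (h : RKills S' ψ u) (hS : S ⊆ S') : RKills S ψ u := fun _ hA => h (hS hA)

lemma LEpi.mono {S S' : Set C} {X X' : C} {ψ : X' ⟶ X} (h : LEpi S' ψ) (hS : S ⊆ S') :
    LEpi S ψ := fun _ hA => h (hS hA)

lemma LKills.mono {S S' : Set C} {X' X X₂ : C} {ψ : X' ⟶ X} {u : X₂ ⟶ X}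
    (h : LKills S' ψ u) (hS : S ⊆ S') : LKills S ψ u := fun _ hA => h (hS hA)

lemma REpi.comp {S : Set C} {X X' X₂ : C} {ψ : X ⟶ X'} {u : X ⟶ X₂} {ψ₂ : X₂ ⟶ X'}
    (hc : u ≫ ψ₂ = ψ) (h : REpi S ψ) : REpi S ψ₂ := by
  intro A hA g
  obtain ⟨f, hf⟩ := h hA g
  exact ⟨f ≫ u, by rw [Category.assoc, hc, hf]⟩

lemma LEpi.comp {S : Set C} {X X' X₂ : C} {ψ : X' ⟶ X} {u : X₂ ⟶ X} {ψ₂ : X' ⟶ X₂}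
    (hc : ψ₂ ≫ u = ψ) (h : LEpi S ψ) : LEpi S ψ₂ := by
  intro A hA g
  obtain ⟨f, hf⟩ := h hA g
  exact ⟨u ≫ f, by rw [← Category.assoc, hc, hf]⟩

lemma repi_envelope {S : Set C} {X X' : C} {ψ : X ⟶ X'}
    (h : ∀ A ∈ S, ∀ n : ℤ, ∀ g : (A⟦n⟧ : C) ⟶ X', ∃ f : (A⟦n⟧ : C) ⟶ X, f ≫ ψ = g) :
    REpi {B : C | envelope S B} ψ := by
  intro A hA
  refine envelope_ind_shift (Q := fun B => ∀ g : B ⟶ X', ∃ f : B ⟶ X, f ≫ ψ = g)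
    ?_ ?_ ?_ h hA
  · intro B B' e hB g
    obtain ⟨f, hf⟩ := hB (e.hom ≫ g)
    exact ⟨e.inv ≫ f, by rw [Category.assoc, hf, Iso.inv_hom_id_assoc]⟩
  · intro B B' h₁ h₂ g
    obtain ⟨f₁, hf₁⟩ := h₁ (biprod.inl ≫ g)
    obtain ⟨f₂, hf₂⟩ := h₂ (biprod.inr ≫ g)
    refine ⟨biprod.desc f₁ f₂, ?_⟩
    apply biprod.hom_ext'
    · rw [biprod.inl_desc_assoc, hf₁]
    · rw [biprod.inr_desc_assoc, hf₂]
  · intro B Z s r hsr hZ g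
    obtain ⟨f, hf⟩ := hZ (r ≫ g)
    exact ⟨s ≫ f, by rw [Category.assoc, hf, ← Category.assoc, hsr, Category.id_comp]⟩

lemma rkills_envelope {S : Set C} {X X' X₂ : C} {ψ : X ⟶ X'} {u : X ⟶ X₂}
    (h : ∀ A ∈ S, ∀ n : ℤ, ∀ f : (A⟦n⟧ : C) ⟶ X, f ≫ ψ = 0 → f ≫ u = 0) :
    RKills {B : C | envelope S B} ψ u := by
  intro A hA
  refine envelope_ind_shift (Q := fun B => ∀ f : B ⟶ X, f ≫ ψ = 0 → f ≫ u = 0)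
    ?_ ?_ ?_ h hA
  · intro B B' e hB f hf
    have h2 : (e.hom ≫ f) ≫ u = 0 := hB _ (by rw [Category.assoc, hf, comp_zero])
    have h3 : e.inv ≫ (e.hom ≫ f) ≫ u = 0 := by rw [h2, comp_zero]
    simpa [Iso.inv_hom_id_assoc] using h3
  · intro B B' h₁ h₂ f hf
    have e1 : (biprod.inl ≫ f) ≫ u = 0 := h₁ _ (by rw [Category.assoc, hf, comp_zero])
    have e2 : (biprod.inr ≫ f) ≫ u = 0 := h₂ _ (by rw [Category.assoc, hf, comp_zero])
    apply biprod.hom_ext'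
    · rw [← Category.assoc, e1, comp_zero]
    · rw [← Category.assoc, e2, comp_zero]
  · intro B Z s r hsr hZ f hf
    have h2 : (r ≫ f) ≫ u = 0 := hZ _ (by rw [Category.assoc, hf, comp_zero])
    have h3 : s ≫ (r ≫ f) ≫ u = 0 := by rw [h2, comp_zero]
    calc f ≫ u = (s ≫ r) ≫ f ≫ u := by rw [hsr, Category.id_comp]
    _ = s ≫ (r ≫ f) ≫ u := by simp only [Category.assoc]
    _ = 0 := h3

lemma lepi_envelope {S : Set C} {X' X : C} {ψ : X' ⟶ X}
    (h : ∀ A ∈ S, ∀ n : ℤ, ∀ g : X' ⟶ (A⟦n⟧ : C), ∃ f : X ⟶ (A⟦n⟧ : C), ψ ≫ f = g) :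
    LEpi {B : C | envelope S B} ψ := by
  intro A hA
  refine envelope_ind_shift (Q := fun B => ∀ g : X' ⟶ B, ∃ f : X ⟶ B, ψ ≫ f = g)
    ?_ ?_ ?_ h hA
  · intro B B' e hB g
    obtain ⟨f, hf⟩ := hB (g ≫ e.inv)
    exact ⟨f ≫ e.hom, by rw [← Category.assoc, hf, Category.assoc, Iso.inv_hom_id,
      Category.comp_id]⟩
  · intro B B' h₁ h₂ g
    obtain ⟨f₁, hf₁⟩ := h₁ (g ≫ biprod.fst)
    obtain ⟨f₂, hf₂⟩ := h₂ (g ≫ biprod.snd)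
    refine ⟨biprod.lift f₁ f₂, ?_⟩
    apply biprod.hom_ext
    · rw [Category.assoc, biprod.lift_fst, hf₁]
    · rw [Category.assoc, biprod.lift_snd, hf₂]
  · intro B Z s r hsr hZ g
    obtain ⟨f, hf⟩ := hZ (g ≫ s)
    exact ⟨f ≫ r, by rw [← Category.assoc, hf, Category.assoc, hsr, Category.comp_id]⟩

lemma lkills_envelope {S : Set C} {X' X X₂ : C} {ψ : X' ⟶ X} {u : X₂ ⟶ X}
    (h : ∀ A ∈ S, ∀ n : ℤ, ∀ f : X ⟶ (A⟦n⟧ : C), ψ ≫ f = 0 → u ≫ f = 0) :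
    LKills {B : C | envelope S B} ψ u := by
  intro A hA
  refine envelope_ind_shift (Q := fun B => ∀ f : X ⟶ B, ψ ≫ f = 0 → u ≫ f = 0)
    ?_ ?_ ?_ h hA
  · intro B B' e hB f hf
    have h2 : u ≫ f ≫ e.inv = 0 :=
      hB (f ≫ e.inv) (by rw [← Category.assoc, hf, zero_comp])
    have h3 : (u ≫ f ≫ e.inv) ≫ e.hom = 0 := by rw [h2, zero_comp]
    simpa [Category.assoc] using h3
  · intro B B' h₁ h₂ f hf
    have e1 : u ≫ f ≫ biprod.fst = 0 := h₁ _ (by rw [← Category.assoc, hf, zero_comp])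
    have e2 : u ≫ f ≫ biprod.snd = 0 := h₂ _ (by rw [← Category.assoc, hf, zero_comp])
    apply biprod.hom_ext
    · rw [Category.assoc, e1, zero_comp]
    · rw [Category.assoc, e2, zero_comp]
  · intro B Z s r hsr hZ f hf
    have h2 : u ≫ f ≫ s = 0 :=
      hZ (f ≫ s) (by rw [← Category.assoc, hf, zero_comp])
    calc u ≫ f = u ≫ f ≫ s ≫ r := by rw [hsr, Category.comp_id]
    _ = (u ≫ f ≫ s) ≫ r := by simp only [Category.assoc]
    _ = 0 := by rw [h2, zero_comp]

end Main

section Chase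

variable {C : Type u} [Category.{v} C] [HasZeroObject C] [Preadditive C]
  [HasShift C ℤ] [∀ n : ℤ, (shiftFunctor C n).Additive] [Pretriangulated C]
  [HasBinaryBiproducts C]

lemma repi_star {S₁ S₂ : Set C} {X' XA XB : C} {ψA : XA ⟶ X'} {ψB : XB ⟶ X'} {u : XA ⟶ XB}
    (hcomp : u ≫ ψB = ψA)
    (hepiA : REpi S₁ ψA) (hkills : RKills S₂ ψA u)
    (hS₂shift : ∀ A ∈ S₂, ∀ n : ℤ, (A⟦n⟧ : C) ∈ S₂)
    (hepiB : REpi S₂ ψB)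
    {A : C} (hA : A ∈ starProd S₁ S₂) : ∀ g : A ⟶ X', ∃ f : A ⟶ XB, f ≫ ψB = g := by
  obtain ⟨C₁, C₂, h₁, h₂, a, b, c, hT⟩ := hA
  intro g
  have hiT := inv_rot_of_distTriang _ hT
  have h0wa : (Triangle.mk a b c).invRotate.mor₁ ≫ a = 0 :=
    comp_distTriang_mor_zero₁₂ _ hiT
  obtain ⟨f₁, hf₁⟩ := hepiA h₁ (a ≫ g)
  have hw : ((Triangle.mk a b c).invRotate.mor₁ ≫ f₁) ≫ ψA = 0 :=
    (Category.assoc _ _ _).trans ((congrArg (_ ≫ ·) hf₁).trans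
      ((Category.assoc _ _ _).symm.trans ((congrArg (· ≫ g) h0wa).trans zero_comp)))
  have hk : ((Triangle.mk a b c).invRotate.mor₁ ≫ f₁) ≫ u = 0 :=
    hkills (hS₂shift _ h₂ (-1)) _ hw
  have yon2' : ∀ (φ : C₁ ⟶ XB), (Triangle.mk a b c).invRotate.mor₁ ≫ φ = 0 →
      ∃ g' : A ⟶ XB, φ = a ≫ g' :=
    fun φ h0 => Triangle.yoneda_exact₂ _ hiT φ h0
  obtain ⟨f', hf'⟩ := yon2' (f₁ ≫ u) ((Category.assoc _ _ _).symm.trans hk)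
  have hd : a ≫ (g - f' ≫ ψB) = 0 := by
    rw [Preadditive.comp_sub, ← Category.assoc, ← hf', Category.assoc, hcomp, hf₁, sub_self]
  have yon2 : ∀ (φ : A ⟶ X'), a ≫ φ = 0 → ∃ g' : C₂ ⟶ X', φ = b ≫ g' :=
    fun φ h0 => Triangle.yoneda_exact₂ _ hT φ h0
  obtain ⟨g₂, hg₂⟩ := yon2 (g - f' ≫ ψB) hd
  obtain ⟨f₂, hf₂⟩ := hepiB h₂ g₂
  refine ⟨f' + b ≫ f₂, ?_⟩
  rw [Preadditive.add_comp, Category.assoc, hf₂, ← hg₂]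
  abel

lemma rkills_star {S₁ S₂ : Set C} {X' XA XB XC : C} {ψA : XA ⟶ X'} {ψB : XB ⟶ X'}
    {u₁ : XA ⟶ XB} {u₂ : XB ⟶ XC}
    (hcomp₁ : u₁ ≫ ψB = ψA)
    (hkills₁ : RKills S₁ ψA u₁) (hkills₂ : RKills S₂ ψB u₂)
    (hepiB : REpi S₁ ψB)
    (hS₁shift : ∀ A ∈ S₁, ∀ n : ℤ, (A⟦n⟧ : C) ∈ S₁)
    {A : C} (hA : A ∈ starProd S₁ S₂) :
    ∀ f : A ⟶ XA, f ≫ ψA = 0 → (f ≫ u₁) ≫ u₂ = 0 := by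
  obtain ⟨C₁, C₂, h₁, h₂, a, b, c, hT⟩ := hA
  intro f hf
  have h0bc : b ≫ c = 0 := comp_distTriang_mor_zero₂₃ _ hT
  have h1 : (a ≫ f) ≫ u₁ = 0 := hkills₁ h₁ _ (by rw [Category.assoc, hf, comp_zero])
  have yon2 : ∀ (φ : A ⟶ XB), a ≫ φ = 0 → ∃ g' : C₂ ⟶ XB, φ = b ≫ g' :=
    fun φ h0 => Triangle.yoneda_exact₂ _ hT φ h0
  obtain ⟨t, ht⟩ := yon2 (f ≫ u₁) (by rw [← Category.assoc]; exact h1)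
  have h2 : b ≫ (t ≫ ψB) = 0 := by
    rw [← Category.assoc, ← ht, Category.assoc, hcomp₁, hf]
  have yon3 : ∀ (φ : C₂ ⟶ X'), b ≫ φ = 0 → ∃ g' : (C₁⟦(1:ℤ)⟧ : C) ⟶ X', φ = c ≫ g' :=
    fun φ h0 => Triangle.yoneda_exact₃ _ hT φ h0
  obtain ⟨g', hg'⟩ := yon3 (t ≫ ψB) h2
  obtain ⟨h, hh⟩ := hepiB (hS₁shift _ h₁ 1) g'
  have ht' : (t - c ≫ h) ≫ ψB = 0 := by
    rw [Preadditive.sub_comp, Category.assoc, hh, ← hg', sub_self]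
  have ht'k : (t - c ≫ h) ≫ u₂ = 0 := hkills₂ h₂ _ ht'
  have hsub : t ≫ u₂ - (c ≫ h) ≫ u₂ = 0 := by rw [← Preadditive.sub_comp]; exact ht'k
  have htu : t ≫ u₂ = (c ≫ h) ≫ u₂ := sub_eq_zero.mp hsub
  rw [ht, Category.assoc, htu]
  simp only [← Category.assoc]
  rw [h0bc, zero_comp, zero_comp]

lemma lepi_star {S₁ S₂ : Set C} {X' XA XB : C} {ψA : X' ⟶ XA} {ψB : X' ⟶ XB} {u : XB ⟶ XA}
    (hcomp : ψB ≫ u = ψA)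
    (hepiA : LEpi S₂ ψA) (hkills : LKills S₁ ψA u)
    (hS₁shift : ∀ A ∈ S₁, ∀ n : ℤ, (A⟦n⟧ : C) ∈ S₁)
    (hepiB : LEpi S₁ ψB)
    {A : C} (hA : A ∈ starProd S₁ S₂) : ∀ g : X' ⟶ A, ∃ f : XB ⟶ A, ψB ≫ f = g := by
  obtain ⟨C₁, C₂, h₁, h₂, a, b, c, hT⟩ := hA
  intro g
  have h0bc : b ≫ c = 0 := comp_distTriang_mor_zero₂₃ _ hT
  obtain ⟨f₁, hf₁⟩ := hepiA h₂ (g ≫ b)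
  have hob : ψA ≫ (f₁ ≫ c) = 0 := by
    rw [← Category.assoc, hf₁, Category.assoc, h0bc, comp_zero]
  have hk : u ≫ f₁ ≫ c = 0 := hkills (hS₁shift _ h₁ 1) _ hob
  have coyon3 : ∀ (φ : XB ⟶ C₂), φ ≫ c = 0 → ∃ g' : XB ⟶ A, φ = g' ≫ b :=
    fun φ h0 => Triangle.coyoneda_exact₃ _ hT φ h0
  obtain ⟨f', hf'⟩ := coyon3 (u ≫ f₁) (by rw [Category.assoc]; exact hk)
  have hd : (g - ψB ≫ f') ≫ b = 0 := by
    rw [Preadditive.sub_comp, Category.assoc, ← hf', ← Category.assoc, hcomp, hf₁, sub_self]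
  have coyon2 : ∀ (φ : X' ⟶ A), φ ≫ b = 0 → ∃ g' : X' ⟶ C₁, φ = g' ≫ a :=
    fun φ h0 => Triangle.coyoneda_exact₂ _ hT φ h0
  obtain ⟨g₁, hg₁⟩ := coyon2 (g - ψB ≫ f') hd
  obtain ⟨f₂, hf₂⟩ := hepiB h₁ g₁
  refine ⟨f' + f₂ ≫ a, ?_⟩
  rw [Preadditive.comp_add, ← Category.assoc, hf₂, ← hg₁]
  abel

lemma lkills_star {S₁ S₂ : Set C} {X' XA XB XC : C} {ψA : X' ⟶ XA} {ψB : X' ⟶ XB}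
    {u₁ : XB ⟶ XA} {u₂ : XC ⟶ XB}
    (hcomp₁ : ψB ≫ u₁ = ψA)
    (hkills₁ : LKills S₂ ψA u₁) (hkills₂ : LKills S₁ ψB u₂)
    (hepiB : LEpi S₂ ψB)
    (hS₂shift : ∀ A ∈ S₂, ∀ n : ℤ, (A⟦n⟧ : C) ∈ S₂)
    {A : C} (hA : A ∈ starProd S₁ S₂) :
    ∀ f : XA ⟶ A, ψA ≫ f = 0 → u₂ ≫ u₁ ≫ f = 0 := by
  obtain ⟨C₁, C₂, h₁, h₂, a, b, c, hT⟩ := hA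
  intro f hf
  have hiT := inv_rot_of_distTriang _ hT
  obtain ⟨w, hw0, hcoyon⟩ : ∃ w : (C₂⟦(-1:ℤ)⟧ : C) ⟶ C₁, w ≫ a = 0 ∧
      (∀ (φ : X' ⟶ C₁), φ ≫ a = 0 → ∃ g' : X' ⟶ (C₂⟦(-1:ℤ)⟧ : C), φ = g' ≫ w) :=
    ⟨(Triangle.mk a b c).invRotate.mor₁, comp_distTriang_mor_zero₁₂ _ hiT,
      fun φ h0 => Triangle.coyoneda_exact₂ _ hiT φ h0⟩
  have h1 : u₁ ≫ f ≫ b = 0 :=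
    hkills₁ h₂ _ (by rw [← Category.assoc, hf, zero_comp])
  have coyon2 : ∀ (φ : XB ⟶ A), φ ≫ b = 0 → ∃ g' : XB ⟶ C₁, φ = g' ≫ a :=
    fun φ h0 => Triangle.coyoneda_exact₂ _ hT φ h0
  obtain ⟨t, ht⟩ := coyon2 (u₁ ≫ f) (by rw [Category.assoc]; exact h1)
  have h2 : (ψB ≫ t) ≫ a = 0 := by
    rw [Category.assoc, ← ht, ← Category.assoc, hcomp₁, hf]
  obtain ⟨g', hg'⟩ := hcoyon (ψB ≫ t) h2
  obtain ⟨h, hh⟩ := hepiB (hS₂shift _ h₂ (-1)) g'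
  have ht' : ψB ≫ (t - h ≫ w) = 0 := by
    rw [Preadditive.comp_sub, ← Category.assoc, hh, ← hg', sub_self]
  have ht'k : u₂ ≫ (t - h ≫ w) = 0 := hkills₂ h₁ _ ht'
  have hsub : u₂ ≫ t - u₂ ≫ (h ≫ w) = 0 := by rw [← Preadditive.comp_sub]; exact ht'k
  have hu2t : u₂ ≫ t = u₂ ≫ h ≫ w := sub_eq_zero.mp hsub
  rw [ht, ← Category.assoc, hu2t]
  simp only [Category.assoc]
  rw [hw0, comp_zero, comp_zero]

end Chase

section Steps

variable {C : Type u} [Category.{v} C] [HasZeroObject C] [Preadditive C]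
  [HasShift C ℤ] [∀ n : ℤ, (shiftFunctor C n).Additive] [Pretriangulated C]
  [HasBinaryBiproducts C]
variable (k : Type w) [Field k] [Linear k C]

lemma fd_hom_to (hproper : ∀ X Y : C, FiniteDimensional k (⨁ m : ℤ, (X ⟶ Y⟦m⟧)))
    (G Z : C) (m : ℤ) : FiniteDimensional k ((G⟦m⟧ : C) ⟶ Z) := by
  haveI := fd_component k (hproper (G⟦m⟧) Z) 0
  exact Module.Finite.equiv
    (Linear.homCongr k (Iso.refl ((G⟦m⟧ : C))) ((shiftFunctorZero C ℤ).app Z))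

lemma supp_hom_to (hproper : ∀ X Y : C, FiniteDimensional k (⨁ m : ℤ, (X ⟶ Y⟦m⟧)))
    (G Z : C) : {m : ℤ | ∃ f : (G⟦m⟧ : C) ⟶ Z, f ≠ 0}.Finite := by
  have hfin : {j : ℤ | ∃ x : (G ⟶ (Z⟦j⟧ : C)), x ≠ 0}.Finite := finsupport k (hproper G Z)
  refine Set.Finite.subset (hfin.image (fun j => -j)) ?_
  rintro m ⟨f, hf⟩
  refine ⟨-m, ⟨(((shiftFunctorCompIsoId C m (-m) (by omega)).app G).inv ≫
    (shiftFunctor C (-m)).map f), ?_⟩, by simp⟩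
  intro h0
  apply hf
  have hmap : (shiftFunctor C (-m)).map f = 0 := by
    have := congrArg (fun x => ((shiftFunctorCompIsoId C m (-m) (by omega)).app G).hom ≫ x) h0
    simpa using this
  have hnat := ((shiftFunctorCompIsoId C (-m) m (by omega)).hom.naturality f)
  have hzero : ((shiftFunctor C (-m)) ⋙ (shiftFunctor C m)).map f = 0 := by
    have : ((shiftFunctor C (-m)) ⋙ (shiftFunctor C m)).map f
        = (shiftFunctor C m).map ((shiftFunctor C (-m)).map f) := rfl
    rw [this, hmap, Functor.map_zero]
  rw [hzero, zero_comp] at hnat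
  have := congrArg (fun x =>
    ((shiftFunctorCompIsoId C (-m) m (by omega)).app (G⟦m⟧)).inv ≫ x) hnat.symm
  simpa using this

lemma fd_hom_from (hproper : ∀ X Y : C, FiniteDimensional k (⨁ m : ℤ, (X ⟶ Y⟦m⟧)))
    (G Z : C) (m : ℤ) : FiniteDimensional k (Z ⟶ (G⟦m⟧ : C)) :=
  fd_component k (hproper Z G) m

lemma supp_hom_from (hproper : ∀ X Y : C, FiniteDimensional k (⨁ m : ℤ, (X ⟶ Y⟦m⟧)))
    (G Z : C) : {m : ℤ | ∃ f : Z ⟶ (G⟦m⟧ : C), f ≠ 0}.Finite :=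
  finsupport k (hproper Z G)

/-- Dual of `span_factor`, for maps into shifts of `G`. -/
lemma span_factor_from (G Z : C) (L : List (Σ m : ℤ, (Z ⟶ (G⟦m⟧ : C)))) :
    ∃ (Y : C), envelope {G} Y ∧ ∃ α : Z ⟶ Y,
      (∀ (W : C) (ψ : W ⟶ Z), (∀ e ∈ L, ψ ≫ e.2 = 0) → ψ ≫ α = 0) ∧
      (∀ (m : ℤ) (f : Z ⟶ (G⟦m⟧ : C)),
        f ∈ Submodule.span k {g : Z ⟶ (G⟦m⟧ : C) |
          (⟨m, g⟩ : Σ m : ℤ, (Z ⟶ (G⟦m⟧ : C))) ∈ L} →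
        ∃ β : Y ⟶ (G⟦m⟧ : C), α ≫ β = f) := by
  induction L with
  | nil =>
      refine ⟨G, envelope.of rfl, 0, fun W ψ _ => comp_zero, fun m f hf => ⟨0, ?_⟩⟩
      have : f = 0 := by simpa using hf
      rw [this, comp_zero]
  | cons e L ih =>
      obtain ⟨Y', hY', α', hz', hf'⟩ := ih
      refine ⟨(G⟦e.1⟧ : C) ⊞ Y',
        envelope.sum (envelope.shift e.1 (envelope.of rfl)) hY',
        biprod.lift e.2 α', ?_, ?_⟩
      · intro W ψ hψ
        apply biprod.hom_ext
        · rw [Category.assoc, biprod.lift_fst, zero_comp]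
          exact hψ e (List.mem_cons_self)
        · rw [Category.assoc, biprod.lift_snd, zero_comp]
          exact hz' W ψ (fun e' he' => hψ e' (List.mem_cons_of_mem e he'))
      · intro m f hf
        refine Submodule.span_induction (p := fun f _ =>
            ∃ β : (G⟦e.1⟧ : C) ⊞ Y' ⟶ (G⟦m⟧ : C), biprod.lift e.2 α' ≫ β = f)
          ?_ ⟨0, comp_zero⟩
          (fun x y _ _ ⟨βa, ha⟩ ⟨βb, hb⟩ =>
            ⟨βa + βb, by rw [Preadditive.comp_add, ha, hb]⟩)
          (fun c y _ ⟨β, hβ⟩ => ⟨c • β, by rw [Linear.comp_smul, hβ]⟩) hf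
        intro g hg
        rcases List.mem_cons.mp hg with hg | hg
        · obtain ⟨m', g'⟩ := e
          obtain ⟨rfl, hg2⟩ := Sigma.mk.inj_iff.mp hg
          exact ⟨biprod.fst, by rw [biprod.lift_fst]; exact (eq_of_heq hg2).symm⟩
        · obtain ⟨β', hβ'⟩ := hf' m g (Submodule.subset_span hg)
          exact ⟨biprod.snd ≫ β', by rw [← Category.assoc, biprod.lift_snd, hβ']⟩

/-- Dual of `exists_list_span`. -/
lemma exists_list_span_from (G Z : C) (V : ∀ m : ℤ, Submodule k (Z ⟶ (G⟦m⟧ : C)))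
    (hfin : ∀ m : ℤ, FiniteDimensional k (Z ⟶ (G⟦m⟧ : C)))
    (hsupp : {m : ℤ | V m ≠ ⊥}.Finite) :
    ∃ L : List (Σ m : ℤ, (Z ⟶ (G⟦m⟧ : C))),
      (∀ e ∈ L, e.2 ∈ V e.1) ∧
      (∀ m, V m ≤ Submodule.span k
        {g : Z ⟶ (G⟦m⟧ : C) | (⟨m, g⟩ : Σ m : ℤ, (Z ⟶ (G⟦m⟧ : C))) ∈ L}) := by
  classical
  have hfg : ∀ m, ∃ t : Finset (Z ⟶ (G⟦m⟧ : C)),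
      Submodule.span k (t : Set (Z ⟶ (G⟦m⟧ : C))) = V m := by
    intro m
    haveI := hfin m
    haveI : IsNoetherian k (Z ⟶ (G⟦m⟧ : C)) := IsNoetherian.iff_fg.mpr inferInstance
    exact IsNoetherian.noetherian (V m)
  choose t ht using hfg
  refine ⟨(hsupp.toFinset.sigma t).toList, ?_, ?_⟩
  · rintro ⟨m, g⟩ he
    rw [Finset.mem_toList, Finset.mem_sigma] at he
    rw [← ht m]
    exact Submodule.subset_span he.2
  · intro m
    by_cases hm : m ∈ hsupp.toFinset
    · rw [← ht m]
      apply Submodule.span_mono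
      intro g hg
      simp only [Set.mem_setOf_eq, Finset.mem_toList, Finset.mem_sigma]
      exact ⟨hm, hg⟩
    · rw [Set.Finite.mem_toFinset, Set.mem_setOf_eq, not_not] at hm
      rw [hm]
      exact bot_le

variable {P : Set C} {G : C}

/-- One approximation step on the right: kill the kernel on all shifts of `G`. -/
lemma step_right
    (hproper : ∀ X Y : C, FiniteDimensional k (⨁ m : ℤ, (X ⟶ Y⟦m⟧)))
    (hG : G ∈ P)
    (hshift : ∀ (X : C) (n : ℤ), X ∈ P → (X⟦n⟧ : C) ∈ P)
    (hext : ∀ (T : Triangle C), T ∈ (distTriang C) → T.obj₁ ∈ P → T.obj₃ ∈ P → T.obj₂ ∈ P)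
    (hsummand : ∀ {X Z : C} (s : X ⟶ Z) (r : Z ⟶ X), s ≫ r = 𝟙 X → Z ∈ P → X ∈ P)
    {X X' : C} (hX : X ∈ P) (ψ : X ⟶ X') :
    ∃ (X₂ : C) (_ : X₂ ∈ P) (u : X ⟶ X₂) (ψ₂ : X₂ ⟶ X'),
      u ≫ ψ₂ = ψ ∧ ∀ (m : ℤ) (f : (G⟦m⟧ : C) ⟶ X), f ≫ ψ = 0 → f ≫ u = 0 := by
  set V : ∀ m : ℤ, Submodule k ((G⟦m⟧ : C) ⟶ X) :=
    fun m => LinearMap.ker (Linear.rightComp k (G⟦m⟧ : C) ψ) with hV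
  have hsupp : {m : ℤ | V m ≠ ⊥}.Finite := by
    refine Set.Finite.subset (supp_hom_to k hproper G X) ?_
    intro m hm
    obtain ⟨f, hf, hf0⟩ := Submodule.exists_mem_ne_zero_of_ne_bot hm
    exact ⟨f, hf0⟩
  obtain ⟨L, hLmem, hLspan⟩ := exists_list_span k G X V (fd_hom_to k hproper G X) hsupp
  obtain ⟨Y, hYenv, α, hzero, hfact⟩ := span_factor k G X L
  have hY : Y ∈ P := envelope_mem hG hshift hext hsummand hYenv
  have hαψ : α ≫ ψ = 0 := hzero X' ψ (fun e he => hLmem e he)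
  obtain ⟨X₂, u, w, hT⟩ := Pretriangulated.distinguished_cocone_triangle α
  have hX₂ : X₂ ∈ P := by
    have hrot := rot_of_distTriang _ hT
    exact hext _ hrot hX (hshift Y 1 hY)
  obtain ⟨ψ₂, hψ₂⟩ := Triangle.yoneda_exact₂ _ hT ψ hαψ
  refine ⟨X₂, hX₂, u, ψ₂, hψ₂.symm, ?_⟩
  intro m f hf
  obtain ⟨β, hβ⟩ := hfact m f (hLspan m (by exact hf))
  rw [← hβ, Category.assoc]
  have h0 : α ≫ u = 0 := comp_distTriang_mor_zero₁₂ _ hT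
  rw [h0, comp_zero]

/-- Base step on the right: a map covering all `Hom(G⟦m⟧, X')`. -/
lemma base_right
    (hproper : ∀ X Y : C, FiniteDimensional k (⨁ m : ℤ, (X ⟶ Y⟦m⟧)))
    (hG : G ∈ P)
    (hshift : ∀ (X : C) (n : ℤ), X ∈ P → (X⟦n⟧ : C) ∈ P)
    (hext : ∀ (T : Triangle C), T ∈ (distTriang C) → T.obj₁ ∈ P → T.obj₃ ∈ P → T.obj₂ ∈ P)
    (hsummand : ∀ {X Z : C} (s : X ⟶ Z) (r : Z ⟶ X), s ≫ r = 𝟙 X → Z ∈ P → X ∈ P)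
    (X' : C) :
    ∃ (X₁ : C) (_ : X₁ ∈ P) (ψ₁ : X₁ ⟶ X'),
      ∀ (m : ℤ) (g : (G⟦m⟧ : C) ⟶ X'), ∃ f : (G⟦m⟧ : C) ⟶ X₁, f ≫ ψ₁ = g := by
  set V : ∀ m : ℤ, Submodule k ((G⟦m⟧ : C) ⟶ X') := fun m => ⊤ with hV
  have hsupp : {m : ℤ | V m ≠ ⊥}.Finite := by
    refine Set.Finite.subset (supp_hom_to k hproper G X') ?_
    intro m hm
    obtain ⟨f, _, hf0⟩ := Submodule.exists_mem_ne_zero_of_ne_bot hm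
    exact ⟨f, hf0⟩
  obtain ⟨L, hLmem, hLspan⟩ := exists_list_span k G X' V (fd_hom_to k hproper G X') hsupp
  obtain ⟨Y, hYenv, α, hzero, hfact⟩ := span_factor k G X' L
  exact ⟨Y, envelope_mem hG hshift hext hsummand hYenv, α,
    fun m g => hfact m g (hLspan m trivial)⟩

/-- One approximation step on the left. -/
lemma step_left
    (hproper : ∀ X Y : C, FiniteDimensional k (⨁ m : ℤ, (X ⟶ Y⟦m⟧)))
    (hG : G ∈ P)
    (hshift : ∀ (X : C) (n : ℤ), X ∈ P → (X⟦n⟧ : C) ∈ P)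
    (hext : ∀ (T : Triangle C), T ∈ (distTriang C) → T.obj₁ ∈ P → T.obj₃ ∈ P → T.obj₂ ∈ P)
    (hsummand : ∀ {X Z : C} (s : X ⟶ Z) (r : Z ⟶ X), s ≫ r = 𝟙 X → Z ∈ P → X ∈ P)
    {X X' : C} (hX : X ∈ P) (ψ : X' ⟶ X) :
    ∃ (X₂ : C) (_ : X₂ ∈ P) (u : X₂ ⟶ X) (ψ₂ : X' ⟶ X₂),
      ψ₂ ≫ u = ψ ∧ ∀ (m : ℤ) (f : X ⟶ (G⟦m⟧ : C)), ψ ≫ f = 0 → u ≫ f = 0 := by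
  set V : ∀ m : ℤ, Submodule k (X ⟶ (G⟦m⟧ : C)) :=
    fun m => LinearMap.ker (Linear.leftComp k (G⟦m⟧ : C) ψ) with hV
  have hsupp : {m : ℤ | V m ≠ ⊥}.Finite := by
    refine Set.Finite.subset (supp_hom_from k hproper G X) ?_
    intro m hm
    obtain ⟨f, _, hf0⟩ := Submodule.exists_mem_ne_zero_of_ne_bot hm
    exact ⟨f, hf0⟩
  obtain ⟨L, hLmem, hLspan⟩ := exists_list_span_from k G X V (fd_hom_from k hproper G X) hsupp
  obtain ⟨Y, hYenv, α, hzero, hfact⟩ := span_factor_from k G X L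
  have hY : Y ∈ P := envelope_mem hG hshift hext hsummand hYenv
  have hψα : ψ ≫ α = 0 := hzero X' ψ (fun e he => hLmem e he)
  obtain ⟨X₂, u, w, hT⟩ := Pretriangulated.distinguished_cocone_triangle₁ α
  have hX₂ : X₂ ∈ P := by
    have hrot := inv_rot_of_distTriang _ hT
    exact hext _ hrot (hshift Y (-1) hY) hX
  obtain ⟨ψ₂, hψ₂⟩ := Triangle.coyoneda_exact₂ _ hT ψ hψα
  refine ⟨X₂, hX₂, u, ψ₂, hψ₂.symm, ?_⟩
  intro m f hf
  obtain ⟨β, hβ⟩ := hfact m f (hLspan m (by exact hf))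
  rw [← hβ, ← Category.assoc]
  have h0 : u ≫ α = 0 := comp_distTriang_mor_zero₁₂ _ hT
  rw [h0, zero_comp]

/-- Base step on the left. -/
lemma base_left
    (hproper : ∀ X Y : C, FiniteDimensional k (⨁ m : ℤ, (X ⟶ Y⟦m⟧)))
    (hG : G ∈ P)
    (hshift : ∀ (X : C) (n : ℤ), X ∈ P → (X⟦n⟧ : C) ∈ P)
    (hext : ∀ (T : Triangle C), T ∈ (distTriang C) → T.obj₁ ∈ P → T.obj₃ ∈ P → T.obj₂ ∈ P)
    (hsummand : ∀ {X Z : C} (s : X ⟶ Z) (r : Z ⟶ X), s ≫ r = 𝟙 X → Z ∈ P → X ∈ P)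
    (X' : C) :
    ∃ (X₁ : C) (_ : X₁ ∈ P) (ψ₁ : X' ⟶ X₁),
      ∀ (m : ℤ) (g : X' ⟶ (G⟦m⟧ : C)), ∃ f : X₁ ⟶ (G⟦m⟧ : C), ψ₁ ≫ f = g := by
  set V : ∀ m : ℤ, Submodule k (X' ⟶ (G⟦m⟧ : C)) := fun m => ⊤ with hV
  have hsupp : {m : ℤ | V m ≠ ⊥}.Finite := by
    refine Set.Finite.subset (supp_hom_from k hproper G X') ?_
    intro m hm
    obtain ⟨f, _, hf0⟩ := Submodule.exists_mem_ne_zero_of_ne_bot hm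
    exact ⟨f, hf0⟩
  obtain ⟨L, hLmem, hLspan⟩ := exists_list_span_from k G X' V (fd_hom_from k hproper G X') hsupp
  obtain ⟨Y, hYenv, α, hzero, hfact⟩ := span_factor_from k G X' L
  exact ⟨Y, envelope_mem hG hshift hext hsummand hYenv, α,
    fun m g => hfact m g (hLspan m trivial)⟩

end Steps

section Induct

variable {C : Type u} [Category.{v} C] [HasZeroObject C] [Preadditive C]
  [HasShift C ℤ] [∀ n : ℤ, (shiftFunctor C n).Additive] [Pretriangulated C]
  [HasBinaryBiproducts C]
variable (k : Type w) [Field k] [Linear k C]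
variable {P : Set C} {G : C}

lemma q_right
    (hproper : ∀ X Y : C, FiniteDimensional k (⨁ m : ℤ, (X ⟶ Y⟦m⟧)))
    (hG : G ∈ P)
    (hshift : ∀ (X : C) (n : ℤ), X ∈ P → (X⟦n⟧ : C) ∈ P)
    (hext : ∀ (T : Triangle C), T ∈ (distTriang C) → T.obj₁ ∈ P → T.obj₃ ∈ P → T.obj₂ ∈ P)
    (hsummand : ∀ {X Z : C} (s : X ⟶ Z) (r : Z ⟶ X), s ≫ r = 𝟙 X → Z ∈ P → X ∈ P)
    (X' : C) :
    ∀ d : ℕ, ∀ (X : C), X ∈ P → ∀ ψ : X ⟶ X', REpi (genIdx G d) ψ →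
    ∃ (X₂ : C) (_ : X₂ ∈ P) (u : X ⟶ X₂) (ψ₂ : X₂ ⟶ X'),
      u ≫ ψ₂ = ψ ∧ RKills (genIdx G d) ψ u ∧ REpi (genIdx G d) ψ₂ := by
  intro d
  induction d with
  | zero =>
      intro X hX ψ hepi
      obtain ⟨X₂, hX₂, u, ψ₂, hc, hk⟩ := step_right k hproper hG hshift hext hsummand hX ψ
      refine ⟨X₂, hX₂, u, ψ₂, hc, ?_, REpi.comp hc hepi⟩
      exact rkills_envelope (fun A hA n f hf => by
        subst hA; exact hk n f hf)
  | succ d ih =>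
      intro X hX ψ hepi
      have hepi_d : REpi (genIdx G d) ψ := hepi.mono (genIdx_mono (Nat.le_succ d))
      obtain ⟨X₂, hX₂, u₁, ψ₂, hc₁, hk₁, hepi₂d⟩ := ih X hX ψ hepi_d
      obtain ⟨X₃, hX₃, u₂, ψ₃, hc₂, hk₂⟩ :=
        step_right k hproper hG hshift hext hsummand hX₂ ψ₂
      have hk₂env : RKills {B : C | envelope {G} B} ψ₂ u₂ :=
        rkills_envelope (fun A hA n f hf => by subst hA; exact hk₂ n f hf)
      have henvsub : {B : C | envelope {G} B} ⊆ genIdx G d :=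
        fun B hB => envelope_le_genIdx d hB
      have hepi₃env : REpi {B : C | envelope {G} B} ψ₃ :=
        REpi.comp hc₂ (hepi₂d.mono henvsub)
      refine ⟨X₃, hX₃, u₁ ≫ u₂, ψ₃, by rw [Category.assoc, hc₂, hc₁], ?_, ?_⟩
      · refine rkills_envelope (S := starProd (genIdx G d) {B : C | envelope {G} B}) ?_
        intro A hA n f hf
        have hAn : ((A⟦n⟧ : C)) ∈ starProd (genIdx G d) {B : C | envelope {G} B} :=
          starProd_shift (fun B hB m => genIdx_shift hB m)
            (fun B hB m => envelope.shift m hB) hA n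
        have := rkills_star hc₁ hk₁ hk₂env hepi₂d
          (fun B hB m => genIdx_shift hB m) hAn f hf
        rw [← Category.assoc]
        exact this
      · refine repi_envelope (S := starProd (genIdx G d) {B : C | envelope {G} B}) ?_
        intro A hA n g
        have hAn : ((A⟦n⟧ : C)) ∈ starProd (genIdx G d) {B : C | envelope {G} B} :=
          starProd_shift (fun B hB m => genIdx_shift hB m)
            (fun B hB m => envelope.shift m hB) hA n
        exact repi_star hc₂ hepi₂d hk₂env
          (fun B hB m => envelope.shift m hB) hepi₃env hAn g

lemma boot_right
    (hproper : ∀ X Y : C, FiniteDimensional k (⨁ m : ℤ, (X ⟶ Y⟦m⟧)))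
    (hG : G ∈ P)
    (hshift : ∀ (X : C) (n : ℤ), X ∈ P → (X⟦n⟧ : C) ∈ P)
    (hext : ∀ (T : Triangle C), T ∈ (distTriang C) → T.obj₁ ∈ P → T.obj₃ ∈ P → T.obj₂ ∈ P)
    (hsummand : ∀ {X Z : C} (s : X ⟶ Z) (r : Z ⟶ X), s ≫ r = 𝟙 X → Z ∈ P → X ∈ P)
    (X' : C) :
    ∀ d : ℕ, ∀ (X : C), X ∈ P → ∀ ψ : X ⟶ X', REpi (genIdx G 0) ψ →
    ∃ (X₂ : C) (_ : X₂ ∈ P) (ψ₂ : X₂ ⟶ X'), REpi (genIdx G d) ψ₂ := by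
  intro d
  induction d with
  | zero => exact fun X hX ψ h => ⟨X, hX, ψ, h⟩
  | succ d ih =>
      intro X hX ψ h
      obtain ⟨X₂, hX₂, ψ₂, hepi_d⟩ := ih X hX ψ h
      obtain ⟨X₃, hX₃, u, ψ₃, hc, hk, hepi₃d⟩ :=
        q_right k hproper hG hshift hext hsummand X' d X₂ hX₂ ψ₂ hepi_d
      have henvsub : {B : C | envelope {G} B} ⊆ genIdx G d :=
        fun B hB => envelope_le_genIdx d hB
      refine ⟨X₃, hX₃, ψ₃, ?_⟩
      refine repi_envelope (S := starProd (genIdx G d) {B : C | envelope {G} B}) ?_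
      intro A hA n g
      have hAn : ((A⟦n⟧ : C)) ∈ starProd (genIdx G d) {B : C | envelope {G} B} :=
        starProd_shift (fun B hB m => genIdx_shift hB m)
          (fun B hB m => envelope.shift m hB) hA n
      exact repi_star hc hepi_d (hk.mono henvsub)
        (fun B hB m => envelope.shift m hB) (hepi₃d.mono henvsub) hAn g

lemma q_left
    (hproper : ∀ X Y : C, FiniteDimensional k (⨁ m : ℤ, (X ⟶ Y⟦m⟧)))
    (hG : G ∈ P)
    (hshift : ∀ (X : C) (n : ℤ), X ∈ P → (X⟦n⟧ : C) ∈ P)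
    (hext : ∀ (T : Triangle C), T ∈ (distTriang C) → T.obj₁ ∈ P → T.obj₃ ∈ P → T.obj₂ ∈ P)
    (hsummand : ∀ {X Z : C} (s : X ⟶ Z) (r : Z ⟶ X), s ≫ r = 𝟙 X → Z ∈ P → X ∈ P)
    (X' : C) :
    ∀ d : ℕ, ∀ (X : C), X ∈ P → ∀ ψ : X' ⟶ X, LEpi (genIdx G d) ψ →
    ∃ (X₂ : C) (_ : X₂ ∈ P) (u : X₂ ⟶ X) (ψ₂ : X' ⟶ X₂),
      ψ₂ ≫ u = ψ ∧ LKills (genIdx G d) ψ u ∧ LEpi (genIdx G d) ψ₂ := by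
  intro d
  induction d with
  | zero =>
      intro X hX ψ hepi
      obtain ⟨X₂, hX₂, u, ψ₂, hc, hk⟩ := step_left k hproper hG hshift hext hsummand hX ψ
      refine ⟨X₂, hX₂, u, ψ₂, hc, ?_, LEpi.comp hc hepi⟩
      exact lkills_envelope (fun A hA n f hf => by
        subst hA; exact hk n f hf)
  | succ d ih =>
      intro X hX ψ hepi
      obtain ⟨X₂, hX₂, u₁, ψ₂, hc₁, hk₁⟩ :=
        step_left k hproper hG hshift hext hsummand hX ψ
      have hk₁env : LKills {B : C | envelope {G} B} ψ u₁ :=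
        lkills_envelope (fun A hA n f hf => by subst hA; exact hk₁ n f hf)
      have hepi₂succ : LEpi (genIdx G (d+1)) ψ₂ := LEpi.comp hc₁ hepi
      have hepi₂d : LEpi (genIdx G d) ψ₂ := hepi₂succ.mono (genIdx_mono (Nat.le_succ d))
      obtain ⟨X₃, hX₃, u₂, ψ₃, hc₂, hk₂, hepi₃d⟩ := ih X₂ hX₂ ψ₂ hepi₂d
      have henvsub : {B : C | envelope {G} B} ⊆ genIdx G d :=
        fun B hB => envelope_le_genIdx d hB
      refine ⟨X₃, hX₃, u₂ ≫ u₁, ψ₃, by rw [← Category.assoc, hc₂, hc₁], ?_, ?_⟩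
      · refine lkills_envelope (S := starProd (genIdx G d) {B : C | envelope {G} B}) ?_
        intro A hA n f hf
        have hAn : ((A⟦n⟧ : C)) ∈ starProd (genIdx G d) {B : C | envelope {G} B} :=
          starProd_shift (fun B hB m => genIdx_shift hB m)
            (fun B hB m => envelope.shift m hB) hA n
        have := lkills_star hc₁ hk₁env hk₂ (hepi₂d.mono henvsub)
          (fun B hB m => envelope.shift m hB) hAn f hf
        rw [Category.assoc]
        exact this
      · refine lepi_envelope (S := starProd (genIdx G d) {B : C | envelope {G} B}) ?_
        intro A hA n g
        have hAn : ((A⟦n⟧ : C)) ∈ starProd (genIdx G d) {B : C | envelope {G} B} :=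
          starProd_shift (fun B hB m => genIdx_shift hB m)
            (fun B hB m => envelope.shift m hB) hA n
        exact lepi_star hc₂ (hepi₂d.mono henvsub) hk₂
          (fun B hB m => genIdx_shift hB m) hepi₃d hAn g

lemma boot_left
    (hproper : ∀ X Y : C, FiniteDimensional k (⨁ m : ℤ, (X ⟶ Y⟦m⟧)))
    (hG : G ∈ P)
    (hshift : ∀ (X : C) (n : ℤ), X ∈ P → (X⟦n⟧ : C) ∈ P)
    (hext : ∀ (T : Triangle C), T ∈ (distTriang C) → T.obj₁ ∈ P → T.obj₃ ∈ P → T.obj₂ ∈ P)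
    (hsummand : ∀ {X Z : C} (s : X ⟶ Z) (r : Z ⟶ X), s ≫ r = 𝟙 X → Z ∈ P → X ∈ P)
    (X' : C) :
    ∀ d : ℕ, ∀ (X : C), X ∈ P → ∀ ψ : X' ⟶ X, LEpi (genIdx G 0) ψ →
    ∃ (X₂ : C) (_ : X₂ ∈ P) (ψ₂ : X' ⟶ X₂), LEpi (genIdx G d) ψ₂ := by
  intro d
  induction d with
  | zero => exact fun X hX ψ h => ⟨X, hX, ψ, h⟩
  | succ d ih =>
      intro X hX ψ h
      obtain ⟨X₂, hX₂, ψ₂, hepi_d⟩ := ih X hX ψ h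
      obtain ⟨X₃, hX₃, u, ψ₃, hc, hk, hepi₃d⟩ :=
        q_left k hproper hG hshift hext hsummand X' d X₂ hX₂ ψ₂ hepi_d
      have henvsub : {B : C | envelope {G} B} ⊆ genIdx G d :=
        fun B hB => envelope_le_genIdx d hB
      refine ⟨X₃, hX₃, ψ₃, ?_⟩
      refine lepi_envelope (S := starProd (genIdx G d) {B : C | envelope {G} B}) ?_
      intro A hA n g
      have hAn : ((A⟦n⟧ : C)) ∈ starProd (genIdx G d) {B : C | envelope {G} B} :=
        starProd_shift (fun B hB m => genIdx_shift hB m)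
          (fun B hB m => envelope.shift m hB) hA n
      exact lepi_star hc (hepi_d.mono henvsub) hk
        (fun B hB m => genIdx_shift hB m) hepi₃d hAn g

end Induct

section Endgame

variable {C : Type u} [Category.{v} C] [HasZeroObject C] [Preadditive C]
  [HasShift C ℤ] [∀ n : ℤ, (shiftFunctor C n).Additive] [Pretriangulated C]
  [HasBinaryBiproducts C]
variable (k : Type w) [Field k] [Linear k C]
variable {P : Set C} {G : C}

lemma exists_rep_right
    (hproper : ∀ X Y : C, FiniteDimensional k (⨁ m : ℤ, (X ⟶ Y⟦m⟧)))
    (hG : G ∈ P)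
    (hshift : ∀ (X : C) (n : ℤ), X ∈ P → (X⟦n⟧ : C) ∈ P)
    (hext : ∀ (T : Triangle C), T ∈ (distTriang C) → T.obj₁ ∈ P → T.obj₃ ∈ P → T.obj₂ ∈ P)
    (hsummand : ∀ {X Z : C} (s : X ⟶ Z) (r : Z ⟶ X), s ≫ r = 𝟙 X → Z ∈ P → X ∈ P)
    (hidem : ∀ (X : C), X ∈ P → ∀ e : X ⟶ X, e ≫ e = e →
      ∃ (Y : C) (_ : Y ∈ P) (p : X ⟶ Y) (i : Y ⟶ X), i ≫ p = 𝟙 Y ∧ p ≫ i = e)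
    {n : ℕ} (heq : genIdx G n = P) (X' : C) :
    ∃ (Y : C) (_ : Y ∈ P) (ε : Y ⟶ X'),
      ∀ A ∈ P, ∀ g : A ⟶ X', ∃! t : A ⟶ Y, t ≫ ε = g := by
  obtain ⟨X₁, h₁, ψ₁, hbase⟩ := base_right k hproper hG hshift hext hsummand X'
  have hepi0 : REpi (genIdx G 0) ψ₁ :=
    repi_envelope (fun A hA m g => by subst hA; exact hbase m g)
  obtain ⟨Xa, ha, ψa, hepia⟩ :=
    boot_right k hproper hG hshift hext hsummand X' n X₁ h₁ ψ₁ hepi0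
  obtain ⟨Xb, hb, u, ψb, hc, hkills, hepib⟩ :=
    q_right k hproper hG hshift hext hsummand X' n Xa ha ψa hepia
  rw [heq] at hepia hkills hepib
  obtain ⟨f, hf⟩ := hepia hb ψb
  have h1 : (u ≫ f - 𝟙 Xa) ≫ ψa = 0 := by
    rw [Preadditive.sub_comp, Category.assoc, hf, hc, Category.id_comp, sub_self]
  have h2 : (u ≫ f - 𝟙 Xa) ≫ u = 0 := hkills ha _ h1
  have hufu : (u ≫ f) ≫ u = u := by
    rw [Preadditive.sub_comp, Category.id_comp, sub_eq_zero] at h2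
    exact h2
  set ε : Xb ⟶ Xb := f ≫ u with hε
  have hεψ : ε ≫ ψb = ψb := by rw [hε, Category.assoc, hc, hf]
  have hεε : ε ≫ ε = ε := by
    rw [hε]
    calc (f ≫ u) ≫ f ≫ u = f ≫ ((u ≫ f) ≫ u) := by simp only [Category.assoc]
    _ = f ≫ u := by rw [hufu]
  have habsorb : ∀ A ∈ P, ∀ g : A ⟶ Xb, g ≫ ψb = 0 → g ≫ ε = 0 := by
    intro A hA g hg
    have h3 : (g ≫ f) ≫ ψa = 0 := by rw [Category.assoc, hf, hg]
    have h4 := hkills hA _ h3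
    rw [hε, ← Category.assoc]
    exact h4
  obtain ⟨Y, hY, p, i, hip, hpi⟩ := hidem Xb hb ε hεε
  have key : ∀ A ∈ P, ∀ d : A ⟶ Y, d ≫ (i ≫ ψb) = 0 → d = 0 := by
    intro A hA d hd
    have hdi : (d ≫ i) ≫ ψb = 0 := by rw [Category.assoc]; exact hd
    have h4 : (d ≫ i) ≫ ε = 0 := habsorb A hA _ hdi
    have e3 : (d ≫ i) ≫ ε = d ≫ i := by
      rw [← hpi]
      calc (d ≫ i) ≫ p ≫ i = d ≫ (i ≫ p) ≫ i := by simp only [Category.assoc]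
      _ = d ≫ i := by rw [hip, Category.id_comp]
    have h5 : d ≫ i = 0 := by rw [← e3, h4]
    calc d = (d ≫ i) ≫ p := by rw [Category.assoc, hip, Category.comp_id]
    _ = 0 := by rw [h5, zero_comp]
  refine ⟨Y, hY, i ≫ ψb, ?_⟩
  intro A hA g
  obtain ⟨f₀, hf₀⟩ := hepib hA g
  have e1 : p ≫ i ≫ ψb = ε ≫ ψb := by rw [← Category.assoc, hpi]
  have e2 : ε ≫ ε ≫ ψb = ψb := by rw [← Category.assoc, hεε, hεψ]
  have hmain : (f₀ ≫ ε ≫ p) ≫ (i ≫ ψb) = g := by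
    simp only [Category.assoc]
    rw [e1, e2]
    exact hf₀
  refine ⟨f₀ ≫ ε ≫ p, hmain, ?_⟩
  intro y hy
  have hdz := key A hA (y - f₀ ≫ ε ≫ p)
    (by rw [Preadditive.sub_comp, hy, hmain, sub_self])
  exact sub_eq_zero.mp hdz

end Endgame

section Endgame2

variable {C : Type u} [Category.{v} C] [HasZeroObject C] [Preadditive C]
  [HasShift C ℤ] [∀ n : ℤ, (shiftFunctor C n).Additive] [Pretriangulated C]
  [HasBinaryBiproducts C]
variable (k : Type w) [Field k] [Linear k C]
variable {P : Set C} {G : C}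

lemma exists_rep_left
    (hproper : ∀ X Y : C, FiniteDimensional k (⨁ m : ℤ, (X ⟶ Y⟦m⟧)))
    (hG : G ∈ P)
    (hshift : ∀ (X : C) (n : ℤ), X ∈ P → (X⟦n⟧ : C) ∈ P)
    (hext : ∀ (T : Triangle C), T ∈ (distTriang C) → T.obj₁ ∈ P → T.obj₃ ∈ P → T.obj₂ ∈ P)
    (hsummand : ∀ {X Z : C} (s : X ⟶ Z) (r : Z ⟶ X), s ≫ r = 𝟙 X → Z ∈ P → X ∈ P)
    (hidem : ∀ (X : C), X ∈ P → ∀ e : X ⟶ X, e ≫ e = e →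
      ∃ (Y : C) (_ : Y ∈ P) (p : X ⟶ Y) (i : Y ⟶ X), i ≫ p = 𝟙 Y ∧ p ≫ i = e)
    {n : ℕ} (heq : genIdx G n = P) (X' : C) :
    ∃ (Y : C) (_ : Y ∈ P) (η : X' ⟶ Y),
      ∀ A ∈ P, ∀ g : X' ⟶ A, ∃! t : Y ⟶ A, η ≫ t = g := by
  obtain ⟨X₁, h₁, ψ₁, hbase⟩ := base_left k hproper hG hshift hext hsummand X'
  have hepi0 : LEpi (genIdx G 0) ψ₁ :=
    lepi_envelope (fun A hA m g => by subst hA; exact hbase m g)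
  obtain ⟨Xa, ha, ψa, hepia⟩ :=
    boot_left k hproper hG hshift hext hsummand X' n X₁ h₁ ψ₁ hepi0
  obtain ⟨Xb, hb, u, ψb, hc, hkills, hepib⟩ :=
    q_left k hproper hG hshift hext hsummand X' n Xa ha ψa hepia
  rw [heq] at hepia hkills hepib
  obtain ⟨f, hf⟩ := hepia hb ψb
  have h1 : ψa ≫ (f ≫ u - 𝟙 Xa) = 0 := by
    rw [Preadditive.comp_sub, ← Category.assoc, hf, hc, Category.comp_id, sub_self]
  have h2 : u ≫ (f ≫ u - 𝟙 Xa) = 0 := hkills ha _ h1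
  have hufu : u ≫ (f ≫ u) = u := by
    rw [Preadditive.comp_sub, Category.comp_id, sub_eq_zero] at h2
    exact h2
  set ε : Xb ⟶ Xb := u ≫ f with hε
  have hεψ : ψb ≫ ε = ψb := by rw [hε, ← Category.assoc, hc, hf]
  have hεε : ε ≫ ε = ε := by
    rw [hε]
    calc (u ≫ f) ≫ u ≫ f = (u ≫ (f ≫ u)) ≫ f := by simp only [Category.assoc]
    _ = u ≫ f := by rw [hufu]
  have habsorb : ∀ A ∈ P, ∀ g : Xb ⟶ A, ψb ≫ g = 0 → ε ≫ g = 0 := by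
    intro A hA g hg
    have h3 : ψa ≫ (f ≫ g) = 0 := by rw [← Category.assoc, hf, hg]
    have h4 := hkills hA _ h3
    rw [hε, Category.assoc]
    exact h4
  obtain ⟨Y, hY, p, i, hip, hpi⟩ := hidem Xb hb ε hεε
  have key : ∀ A ∈ P, ∀ d : Y ⟶ A, (ψb ≫ p) ≫ d = 0 → d = 0 := by
    intro A hA d hd
    rw [Category.assoc] at hd
    have h4 : ε ≫ (p ≫ d) = 0 := habsorb A hA _ hd
    have e3 : ε ≫ (p ≫ d) = p ≫ d := by
      rw [← hpi]
      calc (p ≫ i) ≫ p ≫ d = p ≫ (i ≫ p) ≫ d := by simp only [Category.assoc]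
      _ = p ≫ d := by rw [hip, Category.id_comp]
    have h5 : p ≫ d = 0 := by rw [← e3]; exact h4
    calc d = i ≫ (p ≫ d) := by rw [← Category.assoc, hip, Category.id_comp]
    _ = 0 := by rw [h5, comp_zero]
  refine ⟨Y, hY, ψb ≫ p, ?_⟩
  intro A hA g
  obtain ⟨f₀, hf₀⟩ := hepib hA g
  have hmain : (ψb ≫ p) ≫ (i ≫ ε ≫ f₀) = g := by
    calc (ψb ≫ p) ≫ (i ≫ ε ≫ f₀)
        = ψb ≫ ((p ≫ i) ≫ (ε ≫ f₀)) := by simp only [Category.assoc]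
    _ = ψb ≫ (ε ≫ (ε ≫ f₀)) := by rw [hpi]
    _ = ((ψb ≫ ε) ≫ ε) ≫ f₀ := by simp only [Category.assoc]
    _ = ψb ≫ f₀ := by rw [hεψ, hεψ]
    _ = g := hf₀
  refine ⟨i ≫ ε ≫ f₀, hmain, ?_⟩
  intro y hy
  exact sub_eq_zero.mp (key A hA (y - i ≫ ε ≫ f₀)
    (by rw [Preadditive.comp_sub, hy, hmain, sub_self]))

end Endgame2


theorem admissible_of_regular_proper_subcategory
    (k : Type w) [Field k]
    (C : Type u) [Category.{v} C] [HasZeroObject C] [Preadditive C] [Linear k C]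
    [HasShift C ℤ] [∀ n : ℤ, (shiftFunctor C n).Additive] [Pretriangulated C]
    [HasBinaryBiproducts C]
    -- `T'` is proper over `k`:
    (hproper : ∀ X Y : C, FiniteDimensional k (⨁ m : ℤ, (X ⟶ Y⟦m⟧)))
    -- `T ⊆ T'` is a strictly full triangulated subcategory:
    (P : Set C)
    (hiso : ∀ {X Y : C}, (X ≅ Y) → X ∈ P → Y ∈ P)
    (hshift : ∀ (X : C) (n : ℤ), X ∈ P → X⟦n⟧ ∈ P)
    (hext : ∀ (T : Triangle C), T ∈ (distTriang C) →
      T.obj₁ ∈ P → T.obj₃ ∈ P → T.obj₂ ∈ P)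
    (hsummand : ∀ {X Z : C} (s : X ⟶ Z) (r : Z ⟶ X),
      s ≫ r = 𝟙 X → Z ∈ P → X ∈ P)
    -- `T` is regular: it has a strong generator
    (hreg : ∃ (G : C) (_ : G ∈ P) (n : ℕ), genIdx G n = P)
    -- `T` is idempotent complete: every idempotent of an object of `T` splits in `T`
    (hidem : ∀ (X : C), X ∈ P → ∀ e : X ⟶ X, e ≫ e = e →
      ∃ (Y : C) (_ : Y ∈ P) (p : X ⟶ Y) (i : Y ⟶ X), i ≫ p = 𝟙 Y ∧ p ≫ i = e) :
    -- then `T` is admissible in `T'`: the inclusion has right and left adjoints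
    (ObjectProperty.ι (· ∈ P : ObjectProperty C)).IsLeftAdjoint ∧
    (ObjectProperty.ι (· ∈ P : ObjectProperty C)).IsRightAdjoint := by
  obtain ⟨G, hG, n, heq⟩ := hreg
  constructor
  · haveI : ∀ A : C, HasTerminal (CostructuredArrow (ObjectProperty.ι (· ∈ P : ObjectProperty C)) A) := by
      intro A
      obtain ⟨Y, hY, ε, hrep⟩ :=
        exists_rep_right k hproper hG hshift hext hsummand hidem heq A
      have hu := fun (B : CostructuredArrow (ObjectProperty.ι (· ∈ P : ObjectProperty C)) A) =>
        hrep B.left.obj B.left.property B.hom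
      refine IsTerminal.hasTerminal (X := CostructuredArrow.mk
        (Y := (⟨Y, hY⟩ : ObjectProperty.FullSubcategory (· ∈ P : ObjectProperty C))) ε) ?_
      refine IsTerminal.ofUniqueHom (fun B => CostructuredArrow.homMk
        (ObjectProperty.homMk (hu B).choose) (by exact (hu B).choose_spec.1)) ?_
      intro B m
      apply CostructuredArrow.hom_ext
      apply ObjectProperty.hom_ext
      exact (hu B).choose_spec.2 m.left.hom (by exact CostructuredArrow.w m)
    exact isLeftAdjoint_of_costructuredArrowTerminals _
  · haveI : ∀ A : C, HasInitial (StructuredArrow A (ObjectProperty.ι (· ∈ P : ObjectProperty C))) := by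
      intro A
      obtain ⟨Y, hY, η, hrep⟩ :=
        exists_rep_left k hproper hG hshift hext hsummand hidem heq A
      have hu := fun (B : StructuredArrow A (ObjectProperty.ι (· ∈ P : ObjectProperty C))) =>
        hrep B.right.obj B.right.property B.hom
      refine IsInitial.hasInitial (X := StructuredArrow.mk
        (Y := (⟨Y, hY⟩ : ObjectProperty.FullSubcategory (· ∈ P : ObjectProperty C))) η) ?_
      refine IsInitial.ofUniqueHom (fun B => StructuredArrow.homMk
        (ObjectProperty.homMk (hu B).choose) (by exact (hu B).choose_spec.1)) ?_
      intro B m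
      apply StructuredArrow.hom_ext
      apply ObjectProperty.hom_ext
      exact (hu B).choose_spec.2 m.right.hom (by exact StructuredArrow.w m)
    exact isRightAdjointOfStructuredArrowInitials _
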